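/- The group G(Ẽ₆^{(1,1)}) defined by the elliptic Dynkin presentation of type Ẽ₆^{(1,1)} is isomorphic to the group G'(Ẽ₆^{(1,1)}) defined by the new presentation with infinitely many generators tᵢ (i ∈ ℤ). -/

import Mathlib

/-!
STATEMENT 6: The group G(Ẽ₆^{(1,1)}) defined by the elliptic Dynkin presentation is isomorphic
to the group G'(Ẽ₆^{(1,1)}) defined by the new presentation with infinitely many
generators tᵢ (i ∈ ℤ).
-/

namespace EllipticE6

/-- Generators of `G(Ẽ₆^{(1,1)})`: `Sum.inl i` is `tᵢ` (`i ∈ {0,1}`),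
`Sum.inr j` is `s_(j+1)` (so `Sum.inr 0` is `s₁`, ..., `Sum.inr 5` is `s₆`). -/
abbrev GenG : Type := Fin 2 ⊕ Fin 6

/-- Generators of `G'(Ẽ₆^{(1,1)})`: `Sum.inl i` is `tᵢ` (`i ∈ ℤ`),
`Sum.inr j` is `s_(j+1)`. -/
abbrev GenG' : Type := ℤ ⊕ Fin 6

/-- The braid relator `(aba)⁻¹(bab)` encoding the relation `aba = bab`. -/
def br {α : Type} (a b : FreeGroup α) : FreeGroup α := (a * b * a)⁻¹ * (b * a * b)

/-- The commutation relator `(ab)⁻¹(ba)` encoding the relation `ab = ba`. -/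
def cm {α : Type} (a b : FreeGroup α) : FreeGroup α := (a * b)⁻¹ * (b * a)

/-- The pairs of (0-indexed) `s`-generators joined by an edge in the diagram,
i.e. satisfying a braid relation: (s₁,s₄), (s₂,s₅), (s₃,s₆). -/
def braidPairs : List (Fin 6 × Fin 6) := [(0, 3), (1, 4), (2, 5)]

def tG (i : Fin 2) : FreeGroup GenG := FreeGroup.of (Sum.inl i)
def sG (j : Fin 6) : FreeGroup GenG := FreeGroup.of (Sum.inr j)

/-- Relators of the elliptic Dynkin presentation of `G(Ẽ₆^{(1,1)})`:
braid relations between `t₀, t₁` and `s₁, s₂, s₃`, braid relations along the edges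
of the `s`-part of the diagram, the elliptic relations for `s₁, s₂, s₃`, and
commutation relations for all remaining pairs of distinct generators except `{t₀,t₁}`. -/
def relsG : Set (FreeGroup GenG) :=
  { r | (∃ i : Fin 2, ∃ j : Fin 6, j.val < 3 ∧ r = br (tG i) (sG j)) ∨
        (∃ p ∈ braidPairs, r = br (sG p.1) (sG p.2)) ∨
        (∃ j : Fin 6, j.val < 3 ∧
          r = (sG j * tG 1 * tG 0 * sG j * tG 1 * tG 0)⁻¹ *
              (tG 1 * tG 0 * sG j * tG 1 * tG 0 * sG j)) ∨
        (∃ i j : Fin 6, i ≠ j ∧ (i, j) ∉ braidPairs ∧ (j, i) ∉ braidPairs ∧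
          r = cm (sG i) (sG j)) ∨
        (∃ i : Fin 2, ∃ j : Fin 6, 3 ≤ j.val ∧ r = cm (tG i) (sG j)) }

def tG' (i : ℤ) : FreeGroup GenG' := FreeGroup.of (Sum.inl i)
def sG' (j : Fin 6) : FreeGroup GenG' := FreeGroup.of (Sum.inr j)

/-- Relators of the new presentation of `G'(Ẽ₆^{(1,1)})`: braid relations between
every `tᵢ` (`i ∈ ℤ`) and `s₁, s₂, s₃`, the relations `tᵢtᵢ₋₁ = tⱼtⱼ₋₁`, braid relations
along the edges of the `s`-part of the diagram, commutation relations between the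
remaining pairs of distinct `s`-generators, and commutation of every `tᵢ` with
`s₄, …, s₆`. -/
def relsG' : Set (FreeGroup GenG') :=
  { r | (∃ i : ℤ, ∃ j : Fin 6, j.val < 3 ∧ r = br (tG' i) (sG' j)) ∨
        (∃ i j : ℤ, r = (tG' i * tG' (i - 1))⁻¹ * (tG' j * tG' (j - 1))) ∨
        (∃ p ∈ braidPairs, r = br (sG' p.1) (sG' p.2)) ∨
        (∃ i j : Fin 6, i ≠ j ∧ (i, j) ∉ braidPairs ∧ (j, i) ∉ braidPairs ∧
          r = cm (sG' i) (sG' j)) ∨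
        (∃ i : ℤ, ∃ j : Fin 6, 3 ≤ j.val ∧ r = cm (tG' i) (sG' j)) }

section Abstract
variable {G : Type*} [Group G]

lemma braid_c1 {a s : G} (h : a*s*a = s*a*s) : a⁻¹*s*a = s*a*s⁻¹ := by
  calc a⁻¹*s*a = a⁻¹*(s*a*s)*s⁻¹ := by group
  _ = a⁻¹*(a*s*a)*s⁻¹ := by rw [← h]
  _ = s*a*s⁻¹ := by group

lemma braid_c2 {a s : G} (h : a*s*a = s*a*s) : s⁻¹*a*s = a*s*a⁻¹ := by
  calc s⁻¹*a*s = s⁻¹*(a*s*a)*a⁻¹ := by group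
  _ = s⁻¹*(s*a*s)*a⁻¹ := by rw [h]
  _ = a*s*a⁻¹ := by group

lemma braid_c3 {a s : G} (h : a*s*a = s*a*s) : a*s⁻¹ = s⁻¹*a⁻¹*s*a := by
  calc a*s⁻¹ = s⁻¹*(s*a*s⁻¹) := by group
  _ = s⁻¹*(a⁻¹*s*a) := by rw [← braid_c1 h]
  _ = s⁻¹*a⁻¹*s*a := by group

lemma braid_c4 {b s : G} (h : b*s*b = s*b*s) : b⁻¹*s = s*b*s⁻¹*b⁻¹ := by
  calc b⁻¹*s = (b⁻¹*s*b)*b⁻¹ := by group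
  _ = (s*b*s⁻¹)*b⁻¹ := by rw [braid_c1 h]
  _ = s*b*s⁻¹*b⁻¹ := by group

lemma braid_E1 {a b s : G} (ha : a*s*a = s*a*s) (hb : b*s*b = s*b*s) :
    (b*a*b⁻¹)*s*(b*a*b⁻¹) = (b*a)*s*(b*a)*s*(a⁻¹*s⁻¹*b⁻¹) := by
  calc (b*a*b⁻¹)*s*(b*a*b⁻¹) = b*a*(b⁻¹*s*b)*(a*b⁻¹) := by group
  _ = b*a*(s*b*s⁻¹)*(a*b⁻¹) := by rw [braid_c1 hb]
  _ = b*(a*s*b)*(s⁻¹*a*s)*(s⁻¹*b⁻¹) := by group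
  _ = b*(a*s*b)*(a*s*a⁻¹)*(s⁻¹*b⁻¹) := by rw [braid_c2 ha]
  _ = (b*a)*s*(b*a)*s*(a⁻¹*s⁻¹*b⁻¹) := by group

lemma braid_E2 {a b s : G} (hb : b*s*b = s*b*s) :
    s*(b*a*b⁻¹)*s = s*(b*a)*s*(b*a)*(a⁻¹*s⁻¹*b⁻¹) := by
  calc s*(b*a*b⁻¹)*s = s*(b*a)*(b⁻¹*s) := by group
  _ = s*(b*a)*(s*b*s⁻¹*b⁻¹) := by rw [braid_c4 hb]
  _ = s*(b*a)*s*(b*a)*(a⁻¹*s⁻¹*b⁻¹) := by group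

lemma braid_conj_fwd {a b s : G} (ha : a*s*a = s*a*s) (hb : b*s*b = s*b*s)
    (hE : s*(b*a)*s*(b*a) = (b*a)*s*(b*a)*s) :
    (b*a*b⁻¹)*s*(b*a*b⁻¹) = s*(b*a*b⁻¹)*s := by
  rw [braid_E1 ha hb, braid_E2 hb, hE]

lemma braid_conj_bwd {a b s : G} (ha : a*s*a = s*a*s) (hb : b*s*b = s*b*s)
    (h : (b*a*b⁻¹)*s*(b*a*b⁻¹) = s*(b*a*b⁻¹)*s) :
    s*(b*a)*s*(b*a) = (b*a)*s*(b*a)*s := by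
  have h2 : (b*a)*s*(b*a)*s*(a⁻¹*s⁻¹*b⁻¹) = s*(b*a)*s*(b*a)*(a⁻¹*s⁻¹*b⁻¹) := by
    rw [← braid_E1 ha hb, ← braid_E2 hb, h]
  exact (mul_right_cancel h2).symm

lemma braid_E1' {a b s : G} (ha : a*s*a = s*a*s) (hb : b*s*b = s*b*s) :
    (a⁻¹*b*a)*s*(a⁻¹*b*a) = (a⁻¹*s⁻¹*b⁻¹)*(s*(b*a)*s*(b*a)) := by
  calc (a⁻¹*b*a)*s*(a⁻¹*b*a) = a⁻¹*b*(a*s*a⁻¹)*(b*a) := by group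
  _ = a⁻¹*b*(s⁻¹*a*s)*(b*a) := by rw [← braid_c2 ha]
  _ = a⁻¹*(b*s⁻¹)*(a*s*b*a) := by group
  _ = a⁻¹*(s⁻¹*b⁻¹*s*b)*(a*s*b*a) := by rw [braid_c3 hb]
  _ = (a⁻¹*s⁻¹*b⁻¹)*(s*(b*a)*s*(b*a)) := by group

lemma braid_E2' {a b s : G} (ha : a*s*a = s*a*s) :
    s*(a⁻¹*b*a)*s = (a⁻¹*s⁻¹*b⁻¹)*((b*a)*s*(b*a)*s) := by
  calc s*(a⁻¹*b*a)*s = a⁻¹*(a*s*a⁻¹)*(b*a*s) := by group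
  _ = a⁻¹*(s⁻¹*a*s)*(b*a*s) := by rw [← braid_c2 ha]
  _ = (a⁻¹*s⁻¹*b⁻¹)*((b*a)*s*(b*a)*s) := by group

lemma braid_conj_fwd' {a b s : G} (ha : a*s*a = s*a*s) (hb : b*s*b = s*b*s)
    (hE : s*(b*a)*s*(b*a) = (b*a)*s*(b*a)*s) :
    (a⁻¹*b*a)*s*(a⁻¹*b*a) = s*(a⁻¹*b*a)*s := by
  rw [braid_E1' ha hb, braid_E2' ha, hE]

lemma braid_step_up {A B s : G} (hA : A*s*A = s*A*s) (hB : B*s*B = s*B*s)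
    (hE : s*(B*A)*s*(B*A) = (B*A)*s*(B*A)*s) :
    ((B*A)*A*(B*A)⁻¹)*s*((B*A)*A*(B*A)⁻¹) = s*((B*A)*A*(B*A)⁻¹)*s ∧
    ((B*A)*B*(B*A)⁻¹)*s*((B*A)*B*(B*A)⁻¹) = s*((B*A)*B*(B*A)⁻¹)*s := by
  have k1 := braid_conj_fwd hA hB hE
  have hE2 : s*((B*A*B⁻¹)*B)*s*((B*A*B⁻¹)*B) = ((B*A*B⁻¹)*B)*s*((B*A*B⁻¹)*B)*s := by
    have h : (B*A*B⁻¹)*B = B*A := by group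
    rw [h]; exact hE
  have k2 := braid_conj_fwd hB k1 hE2
  constructor
  · have h1 : (B*A)*A*(B*A)⁻¹ = B*A*B⁻¹ := by group
    rw [h1]; exact k1
  · have h2 : (B*A)*B*(B*A)⁻¹ = (B*A*B⁻¹)*B*(B*A*B⁻¹)⁻¹ := by group
    rw [h2]; exact k2

lemma braid_step_down {A B s : G} (hA : A*s*A = s*A*s) (hB : B*s*B = s*B*s)
    (hE : s*(B*A)*s*(B*A) = (B*A)*s*(B*A)*s) :
    ((B*A)⁻¹*A*(B*A))*s*((B*A)⁻¹*A*(B*A)) = s*((B*A)⁻¹*A*(B*A))*s ∧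
    ((B*A)⁻¹*B*(B*A))*s*((B*A)⁻¹*B*(B*A)) = s*((B*A)⁻¹*B*(B*A))*s := by
  have k1 := braid_conj_fwd' hA hB hE
  have hE2 : s*(A*(A⁻¹*B*A))*s*(A*(A⁻¹*B*A)) = (A*(A⁻¹*B*A))*s*(A*(A⁻¹*B*A))*s := by
    have h : A*(A⁻¹*B*A) = B*A := by group
    rw [h]; exact hE
  have k2 := braid_conj_fwd' k1 hA hE2
  constructor
  · have h1 : (B*A)⁻¹*A*(B*A) = (A⁻¹*B*A)⁻¹*A*(A⁻¹*B*A) := by group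
    rw [h1]; exact k2
  · have h2 : (B*A)⁻¹*B*(B*A) = A⁻¹*B*A := by group
    rw [h2]; exact k1

lemma braid_all {t0 t1 s : G} (h0 : t0*s*t0 = s*t0*s) (h1 : t1*s*t1 = s*t1*s)
    (c : G) (hc : c = t1*t0)
    (hE : s*c*s*c = c*s*c*s) (k : ℤ) :
    (c^k*t0*c^(-k))*s*(c^k*t0*c^(-k)) = s*(c^k*t0*c^(-k))*s ∧
    (c^k*t1*c^(-k))*s*(c^k*t1*c^(-k)) = s*(c^k*t1*c^(-k))*s := by
  induction k using Int.induction_on with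
  | zero => exact ⟨by simpa using h0, by simpa using h1⟩
  | succ k ih =>
    obtain ⟨hA, hB⟩ := ih
    set A := c^(k:ℤ)*t0*c^(-(k:ℤ)) with hAdef
    set B := c^(k:ℤ)*t1*c^(-(k:ℤ)) with hBdef
    have hBA : B*A = c := by
      calc B*A = c^(k:ℤ)*(t1*t0)*c^(-(k:ℤ)) := by rw [hAdef, hBdef]; group
      _ = c^(k:ℤ)*c*c^(-(k:ℤ)) := by rw [← hc]
      _ = c := by group
    have hE' : s*(B*A)*s*(B*A) = (B*A)*s*(B*A)*s := by rw [hBA]; exact hE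
    obtain ⟨u, v⟩ := braid_step_up hA hB hE'
    constructor
    · have e : c^((k:ℤ)+1)*t0*c^(-((k:ℤ)+1)) = (B*A)*A*(B*A)⁻¹ := by
        rw [hBA, hAdef]; group
      rw [e]; exact u
    · have e : c^((k:ℤ)+1)*t1*c^(-((k:ℤ)+1)) = (B*A)*B*(B*A)⁻¹ := by
        rw [hBA, hBdef]; group
      rw [e]; exact v
  | pred k ih =>
    obtain ⟨hA, hB⟩ := ih
    set A := c^(-(k:ℤ))*t0*c^(-(-(k:ℤ))) with hAdef
    set B := c^(-(k:ℤ))*t1*c^(-(-(k:ℤ))) with hBdef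
    have hBA : B*A = c := by
      calc B*A = c^(-(k:ℤ))*(t1*t0)*c^(-(-(k:ℤ))) := by rw [hAdef, hBdef]; group
      _ = c^(-(k:ℤ))*c*c^(-(-(k:ℤ))) := by rw [← hc]
      _ = c := by group
    have hE' : s*(B*A)*s*(B*A) = (B*A)*s*(B*A)*s := by rw [hBA]; exact hE
    obtain ⟨u, v⟩ := braid_step_down hA hB hE'
    constructor
    · have e : c^(-(k:ℤ)-1)*t0*c^(-(-(k:ℤ)-1)) = (B*A)⁻¹*A*(B*A) := by
        rw [hBA, hAdef]; group
      rw [e]; exact u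
    · have e : c^(-(k:ℤ)-1)*t1*c^(-(-(k:ℤ)-1)) = (B*A)⁻¹*B*(B*A) := by
        rw [hBA, hBdef]; group
      rw [e]; exact v

end Abstract


section TgSec
variable {G : Type*} [Group G]

/-- `Tg t0 t1 i` is `c^(i/2) * t_(i mod 2) * c^(-(i/2))` where `c = t1*t0`. -/
def Tg (t0 t1 : G) (i : ℤ) : G :=
  (t1*t0)^(i/2) * (if i % 2 = 0 then t0 else t1) * (t1*t0)^(-(i/2))

lemma Tg_zero (t0 t1 : G) : Tg t0 t1 0 = t0 := by norm_num [Tg]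

lemma Tg_one (t0 t1 : G) : Tg t0 t1 1 = t1 := by norm_num [Tg]

lemma Tg_braid {t0 t1 s : G} (h0 : t0*s*t0 = s*t0*s) (h1 : t1*s*t1 = s*t1*s)
    (hE : s*(t1*t0)*s*(t1*t0) = (t1*t0)*s*(t1*t0)*s) (i : ℤ) :
    Tg t0 t1 i * s * Tg t0 t1 i = s * Tg t0 t1 i * s := by
  rcases Int.emod_two_eq_zero_or_one i with h | h
  · have := (braid_all h0 h1 (t1*t0) rfl hE (i/2)).1
    simpa [Tg, h] using this
  · have := (braid_all h0 h1 (t1*t0) rfl hE (i/2)).2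
    simpa [Tg, h] using this

lemma Tg_mul_pred (t0 t1 : G) (i : ℤ) : Tg t0 t1 i * Tg t0 t1 (i-1) = t1*t0 := by
  rcases Int.even_or_odd i with ⟨k, hk⟩ | ⟨k, hk⟩
  · have e1 : i / 2 = k := by omega
    have e2 : i % 2 = 0 := by omega
    have e3 : (i-1) / 2 = k - 1 := by omega
    have e4 : (i-1) % 2 = 1 := by omega
    rw [Tg, Tg, e1, e2, e3, e4]
    norm_num
    group
  · have e1 : i / 2 = k := by omega
    have e2 : i % 2 = 1 := by omega
    have e3 : (i-1) / 2 = k := by omega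
    have e4 : (i-1) % 2 = 0 := by omega
    rw [Tg, Tg, e1, e2, e3, e4]
    norm_num
    generalize t1*t0 = c
    group

lemma Tg_comm {t0 t1 s : G} (h0 : t0*s = s*t0) (h1 : t1*s = s*t1) (i : ℤ) :
    Tg t0 t1 i * s = s * Tg t0 t1 i := by
  have ct0 : Commute s t0 := h0.symm
  have ct1 : Commute s t1 := h1.symm
  have hc : Commute s (t1*t0) := ct1.mul_right ct0
  have hif : Commute s (if i % 2 = 0 then t0 else t1) := by
    split_ifs
    · exact ct0
    · exact ct1
  have key : Commute s (Tg t0 t1 i) := by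
    rw [Tg]
    exact ((hc.zpow_right _).mul_right hif).mul_right (hc.zpow_right _)
  exact key.symm

lemma map_Tg {H : Type*} [Group H] (f : G →* H) (t0 t1 : G) (i : ℤ) :
    f (Tg t0 t1 i) = Tg (f t0) (f t1) i := by
  simp [Tg, map_mul, map_zpow, apply_ite f]

end TgSec

section PG
variable {α : Type*} {rels : Set (FreeGroup α)}

lemma rel_one {r : FreeGroup α} (h : r ∈ rels) :
    PresentedGroup.mk rels r = 1 :=
  (QuotientGroup.eq_one_iff r).mpr (Subgroup.subset_normalClosure h)

lemma of_rel {x y : FreeGroup α} (h : x⁻¹ * y ∈ rels) :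
    PresentedGroup.mk rels x = PresentedGroup.mk rels y := by
  have h1 := rel_one h
  rw [map_mul, map_inv] at h1
  exact inv_mul_eq_one.mp h1

lemma mk_of (x : α) :
    PresentedGroup.mk rels (FreeGroup.of x) = PresentedGroup.of x := rfl

end PG

abbrev tt (i : Fin 2) : PresentedGroup relsG := PresentedGroup.of (Sum.inl i)
abbrev ss (j : Fin 6) : PresentedGroup relsG := PresentedGroup.of (Sum.inr j)
abbrev tt' (i : ℤ) : PresentedGroup relsG' := PresentedGroup.of (Sum.inl i)
abbrev ss' (j : Fin 6) : PresentedGroup relsG' := PresentedGroup.of (Sum.inr j)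

lemma rG_ts (i : Fin 2) (j : Fin 6) (hj : j.val < 3) :
    tt i * ss j * tt i = ss j * tt i * ss j := by
  have h := of_rel (rels := relsG) (x := tG i * sG j * tG i) (y := sG j * tG i * sG j)
    (Or.inl ⟨i, j, hj, rfl⟩)
  simpa [tG, sG, map_mul, mk_of] using h

lemma rG_ss_braid (p : Fin 6 × Fin 6) (hp : p ∈ braidPairs) :
    ss p.1 * ss p.2 * ss p.1 = ss p.2 * ss p.1 * ss p.2 := by
  have h := of_rel (rels := relsG) (x := sG p.1 * sG p.2 * sG p.1)
    (y := sG p.2 * sG p.1 * sG p.2) (Or.inr (Or.inl ⟨p, hp, rfl⟩))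
  simpa [tG, sG, map_mul, mk_of] using h

lemma rG_ell (j : Fin 6) (hj : j.val < 3) :
    ss j * (tt 1 * tt 0) * ss j * (tt 1 * tt 0)
      = (tt 1 * tt 0) * ss j * (tt 1 * tt 0) * ss j := by
  have h := of_rel (rels := relsG) (x := sG j * tG 1 * tG 0 * sG j * tG 1 * tG 0)
    (y := tG 1 * tG 0 * sG j * tG 1 * tG 0 * sG j) (Or.inr (Or.inr (Or.inl ⟨j, hj, rfl⟩)))
  simp only [tG, sG, map_mul, mk_of] at h
  calc ss j * (tt 1 * tt 0) * ss j * (tt 1 * tt 0)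
      = ss j * tt 1 * tt 0 * ss j * tt 1 * tt 0 := by group
  _ = tt 1 * tt 0 * ss j * tt 1 * tt 0 * ss j := h
  _ = (tt 1 * tt 0) * ss j * (tt 1 * tt 0) * ss j := by group

lemma rG_ss_comm (i j : Fin 6) (hij : i ≠ j) (h1 : (i, j) ∉ braidPairs)
    (h2 : (j, i) ∉ braidPairs) : ss i * ss j = ss j * ss i := by
  have h := of_rel (rels := relsG) (x := sG i * sG j) (y := sG j * sG i)
    (Or.inr (Or.inr (Or.inr (Or.inl ⟨i, j, hij, h1, h2, rfl⟩))))
  simpa [tG, sG, map_mul, mk_of] using h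

lemma rG_ts_comm (i : Fin 2) (j : Fin 6) (hj : 3 ≤ j.val) :
    tt i * ss j = ss j * tt i := by
  have h := of_rel (rels := relsG) (x := tG i * sG j) (y := sG j * tG i)
    (Or.inr (Or.inr (Or.inr (Or.inr ⟨i, j, hj, rfl⟩))))
  simpa [tG, sG, map_mul, mk_of] using h

lemma r'_ts (i : ℤ) (j : Fin 6) (hj : j.val < 3) :
    tt' i * ss' j * tt' i = ss' j * tt' i * ss' j := by
  have h := of_rel (rels := relsG') (x := tG' i * sG' j * tG' i) (y := sG' j * tG' i * sG' j)
    (Or.inl ⟨i, j, hj, rfl⟩)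
  simpa [tG', sG', map_mul, mk_of] using h

lemma r'_tt (i j : ℤ) : tt' i * tt' (i-1) = tt' j * tt' (j-1) := by
  have h := of_rel (rels := relsG') (x := tG' i * tG' (i-1)) (y := tG' j * tG' (j-1))
    (Or.inr (Or.inl ⟨i, j, rfl⟩))
  simpa [tG', sG', map_mul, mk_of] using h

lemma r'_ss_braid (p : Fin 6 × Fin 6) (hp : p ∈ braidPairs) :
    ss' p.1 * ss' p.2 * ss' p.1 = ss' p.2 * ss' p.1 * ss' p.2 := by
  have h := of_rel (rels := relsG') (x := sG' p.1 * sG' p.2 * sG' p.1)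
    (y := sG' p.2 * sG' p.1 * sG' p.2) (Or.inr (Or.inr (Or.inl ⟨p, hp, rfl⟩)))
  simpa [tG', sG', map_mul, mk_of] using h

lemma r'_ss_comm (i j : Fin 6) (hij : i ≠ j) (h1 : (i, j) ∉ braidPairs)
    (h2 : (j, i) ∉ braidPairs) : ss' i * ss' j = ss' j * ss' i := by
  have h := of_rel (rels := relsG') (x := sG' i * sG' j) (y := sG' j * sG' i)
    (Or.inr (Or.inr (Or.inr (Or.inl ⟨i, j, hij, h1, h2, rfl⟩))))
  simpa [tG', sG', map_mul, mk_of] using h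

lemma r'_ts_comm (i : ℤ) (j : Fin 6) (hj : 3 ≤ j.val) :
    tt' i * ss' j = ss' j * tt' i := by
  have h := of_rel (rels := relsG') (x := tG' i * sG' j) (y := sG' j * tG' i)
    (Or.inr (Or.inr (Or.inr (Or.inr ⟨i, j, hj, rfl⟩))))
  simpa [tG', sG', map_mul, mk_of] using h

/-- The derived elliptic relation in `G'`. -/
lemma r'_ell (j : Fin 6) (hj : j.val < 3) :
    ss' j * (tt' 1 * tt' 0) * ss' j * (tt' 1 * tt' 0)
      = (tt' 1 * tt' 0) * ss' j * (tt' 1 * tt' 0) * ss' j := by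
  have h21 : tt' 2 * tt' 1 = tt' 1 * tt' 0 := by
    have h := r'_tt 2 1
    norm_num at h
    exact h
  have h2e : tt' 1 * tt' 0 * (tt' 1)⁻¹ = tt' 2 := by rw [← h21]; group
  have hb2 := r'_ts 2 j hj
  rw [← h2e] at hb2
  exact braid_conj_bwd (r'_ts 0 j hj) (r'_ts 1 j hj) hb2

def fG : GenG → PresentedGroup relsG'
  | .inl i => tt' (i.val : ℤ)
  | .inr j => ss' j

lemma fG_wd : ∀ r ∈ relsG, FreeGroup.lift fG r = 1 := by
  intro r hr
  simp only [relsG, Set.mem_setOf_eq] at hr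
  obtain ⟨i, j, hj, rfl⟩ | ⟨p, hp, rfl⟩ | ⟨j, hj, rfl⟩ | ⟨i, j, hij, h1, h2, rfl⟩ |
    ⟨i, j, hj, rfl⟩ := hr
  · simp only [br, tG, sG, map_mul, map_inv, FreeGroup.lift_apply_of, fG]
    rw [inv_mul_eq_one]
    exact r'_ts (i.val : ℤ) j hj
  · simp only [br, sG, map_mul, map_inv, FreeGroup.lift_apply_of, fG]
    rw [inv_mul_eq_one]
    exact r'_ss_braid p hp
  · simp only [tG, sG, map_mul, map_inv, FreeGroup.lift_apply_of, fG]
    rw [inv_mul_eq_one]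
    have h := r'_ell j hj
    calc ss' j * tt' 1 * tt' 0 * ss' j * tt' 1 * tt' 0
        = ss' j * (tt' 1 * tt' 0) * ss' j * (tt' 1 * tt' 0) := by group
    _ = (tt' 1 * tt' 0) * ss' j * (tt' 1 * tt' 0) * ss' j := h
    _ = tt' 1 * tt' 0 * ss' j * tt' 1 * tt' 0 * ss' j := by group
  · simp only [cm, sG, map_mul, map_inv, FreeGroup.lift_apply_of, fG]
    rw [inv_mul_eq_one]
    exact r'_ss_comm i j hij h1 h2
  · simp only [cm, tG, sG, map_mul, map_inv, FreeGroup.lift_apply_of, fG]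
    rw [inv_mul_eq_one]
    exact r'_ts_comm (i.val : ℤ) j hj

def φ : PresentedGroup relsG →* PresentedGroup relsG' := PresentedGroup.toGroup fG_wd

def gG : GenG' → PresentedGroup relsG
  | .inl i => Tg (tt 0) (tt 1) i
  | .inr j => ss j

lemma gG_wd : ∀ r ∈ relsG', FreeGroup.lift gG r = 1 := by
  intro r hr
  simp only [relsG', Set.mem_setOf_eq] at hr
  obtain ⟨i, j, hj, rfl⟩ | ⟨i, j, rfl⟩ | ⟨p, hp, rfl⟩ | ⟨i, j, hij, h1, h2, rfl⟩ |
    ⟨i, j, hj, rfl⟩ := hr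
  · simp only [br, tG', sG', map_mul, map_inv, FreeGroup.lift_apply_of, gG]
    rw [inv_mul_eq_one]
    exact Tg_braid (rG_ts 0 j hj) (rG_ts 1 j hj) (rG_ell j hj) i
  · simp only [tG', map_mul, map_inv, FreeGroup.lift_apply_of, gG]
    rw [inv_mul_eq_one]
    rw [Tg_mul_pred, Tg_mul_pred]
  · simp only [br, sG', map_mul, map_inv, FreeGroup.lift_apply_of, gG]
    rw [inv_mul_eq_one]
    exact rG_ss_braid p hp
  · simp only [cm, sG', map_mul, map_inv, FreeGroup.lift_apply_of, gG]
    rw [inv_mul_eq_one]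
    exact rG_ss_comm i j hij h1 h2
  · simp only [cm, tG', sG', map_mul, map_inv, FreeGroup.lift_apply_of, gG]
    rw [inv_mul_eq_one]
    exact Tg_comm (rG_ts_comm 0 j hj) (rG_ts_comm 1 j hj) i

def ψ : PresentedGroup relsG' →* PresentedGroup relsG := PresentedGroup.toGroup gG_wd

lemma tt'_eq_Tg (i : ℤ) : tt' i = Tg (tt' 0) (tt' 1) i := by
  induction i using Int.induction_on with
  | zero => rw [Tg_zero]
  | succ k ih =>
    have h1 : tt' ((k:ℤ)+1) * tt' (k:ℤ) = tt' 1 * tt' 0 := by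
      have h := r'_tt ((k:ℤ)+1) 1
      norm_num at h
      exact h
    have h2 : Tg (tt' 0) (tt' 1) ((k:ℤ)+1) * Tg (tt' 0) (tt' 1) (k:ℤ) = tt' 1 * tt' 0 := by
      have h := Tg_mul_pred (tt' 0) (tt' 1) ((k:ℤ)+1)
      norm_num at h
      exact h
    calc tt' ((k:ℤ)+1) = (tt' 1 * tt' 0) * (tt' (k:ℤ))⁻¹ := by rw [← h1]; group
    _ = (tt' 1 * tt' 0) * (Tg (tt' 0) (tt' 1) (k:ℤ))⁻¹ := by rw [ih]
    _ = Tg (tt' 0) (tt' 1) ((k:ℤ)+1) := by rw [← h2]; group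
  | pred k ih =>
    have h1 : tt' (-(k:ℤ)) * tt' (-(k:ℤ)-1) = tt' 1 * tt' 0 := by
      have h := r'_tt (-(k:ℤ)) 1
      norm_num at h
      exact h
    have h2 : Tg (tt' 0) (tt' 1) (-(k:ℤ)) * Tg (tt' 0) (tt' 1) (-(k:ℤ)-1) = tt' 1 * tt' 0 :=
      Tg_mul_pred _ _ _
    calc tt' (-(k:ℤ)-1) = (tt' (-(k:ℤ)))⁻¹ * (tt' 1 * tt' 0) := by rw [← h1]; group
    _ = (Tg (tt' 0) (tt' 1) (-(k:ℤ)))⁻¹ * (tt' 1 * tt' 0) := by rw [ih]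
    _ = Tg (tt' 0) (tt' 1) (-(k:ℤ)-1) := by rw [← h2]; group

lemma psi_phi : ψ.comp φ = MonoidHom.id (PresentedGroup relsG) := by
  ext x
  rcases x with i | j
  · simp only [MonoidHom.comp_apply, MonoidHom.id_apply, φ, ψ, PresentedGroup.toGroup.of]
    fin_cases i
    · show Tg (tt 0) (tt 1) ((0:ℤ)) = tt 0
      rw [Tg_zero]
    · show Tg (tt 0) (tt 1) ((1:ℤ)) = tt 1
      rw [Tg_one]
  · simp only [MonoidHom.comp_apply, MonoidHom.id_apply, φ, ψ, PresentedGroup.toGroup.of]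
    rfl

lemma phi_psi : φ.comp ψ = MonoidHom.id (PresentedGroup relsG') := by
  ext x
  rcases x with i | j
  · simp only [MonoidHom.comp_apply, MonoidHom.id_apply, φ, ψ, PresentedGroup.toGroup.of]
    show φ (Tg (tt 0) (tt 1) i) = tt' i
    rw [map_Tg]
    have e0 : φ (tt 0) = tt' 0 := by simp [φ, PresentedGroup.toGroup.of]; rfl
    have e1 : φ (tt 1) = tt' 1 := by simp [φ, PresentedGroup.toGroup.of]; rfl
    rw [e0, e1, ← tt'_eq_Tg]
  · simp only [MonoidHom.comp_apply, MonoidHom.id_apply, φ, ψ, PresentedGroup.toGroup.of]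
    rfl

theorem G_iso_G' : Nonempty (PresentedGroup relsG ≃* PresentedGroup relsG') :=
  ⟨MonoidHom.toMulEquiv φ ψ psi_phi phi_psi⟩

end EllipticE6
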